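/- Let g₁,…,gₙ : ℝ → ℝ, β₀ ∈ ℝ, and define f(x) = 1 if β₀ + Σᵢ gᵢ(xᵢ) ≥ 0 and f(x) = 0 otherwise (assume f(x) = 1 for the given input x). For each i, let mᵢ = min over x̃ᵢ ∈ [xᵢ−ε, xᵢ+ε] of gᵢ(x̃ᵢ) (assume each gᵢ is continuous so the minimum exists), and Δᵢ = gᵢ(xᵢ) − mᵢ ≥ 0. Then a subset S ⊆ [n] is a sufficient explanation for ⟨f, x, ε⟩ (with respect to the ℓ∞ ball of radius ε) if and only if β₀ + Σᵢ∈S gᵢ(xᵢ) + Σᵢ∉S mᵢ ≥ 0, equivalently f(x)'s margin β₀ + Σᵢ gᵢ(xᵢ) ≥ Σᵢ∉S Δᵢ. -/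

import Mathlib

/-- The vector equal to `x` on coordinates in `S` and equal to `x̃` on the complement. -/
def patch {n : ℕ} (S : Finset (Fin n)) (x xt : Fin n → ℝ) : Fin n → ℝ :=
  fun i => if i ∈ S then x i else xt i

/-- `S` is a sufficient explanation for `⟨f, x, ε⟩` w.r.t. the ℓ∞ ball of radius ε. -/
def Sufficient {n : ℕ} (f : (Fin n → ℝ) → Fin 2) (x : Fin n → ℝ) (ε : ℝ)
    (S : Finset (Fin n)) : Prop :=
  ∀ xt : Fin n → ℝ, (∀ i, |x i - xt i| ≤ ε) → f (patch S x xt) = f x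

/-- For a NAM binary classifier predicting `1` at `x`, a subset `S` is sufficient iff
`β₀ + Σ_{i∈S} gᵢ(xᵢ) + Σ_{i∉S} mᵢ ≥ 0`, equivalently the margin dominates `Σ_{i∉S} Δᵢ`. -/
theorem stmt2 {n : ℕ} (g : Fin n → ℝ → ℝ) (β₀ : ℝ) (x : Fin n → ℝ) (ε : ℝ) (hε : 0 < ε)
    (hg : ∀ i, Continuous (g i)) (m : Fin n → ℝ)
    (hm : ∀ i, IsLeast (g i '' Set.Icc (x i - ε) (x i + ε)) (m i))
    (f : (Fin n → ℝ) → Fin 2)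
    (hf : ∀ y, f y = if 0 ≤ β₀ + ∑ i, g i (y i) then 1 else 0)
    (hfx : f x = 1) (S : Finset (Fin n)) :
    (Sufficient f x ε S ↔ 0 ≤ β₀ + ∑ i ∈ S, g i (x i) + ∑ i ∈ Sᶜ, m i) ∧
    (Sufficient f x ε S ↔ ∑ i ∈ Sᶜ, (g i (x i) - m i) ≤ β₀ + ∑ i, g i (x i)) := by
  classical
  -- choose minimizers
  choose c hc hgc using fun i => (hm i).1
  have habs : ∀ i, |x i - c i| ≤ ε := by
    intro i
    rcases hc i with ⟨h1, h2⟩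
    rw [abs_le]; constructor <;> linarith
  have hfone : ∀ y, (0 ≤ β₀ + ∑ i, g i (y i)) ↔ f y = 1 := by
    intro y
    rw [hf y]
    constructor
    · intro h; simp [h]
    · intro h
      by_contra hneg
      simp [hneg] at h
  have hsplit : ∀ y : Fin n → ℝ,
      (∑ i, g i (y i)) = ∑ i ∈ S, g i (y i) + ∑ i ∈ Sᶜ, g i (y i) := by
    intro y
    rw [← Finset.sum_add_sum_compl S]
  have hpatchsum : ∀ xt : Fin n → ℝ,
      β₀ + ∑ i, g i (patch S x xt i)
        = β₀ + (∑ i ∈ S, g i (x i) + ∑ i ∈ Sᶜ, g i (xt i)) := by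
    intro xt
    rw [hsplit]
    congr 1
    congr 1
    · exact Finset.sum_congr rfl (fun i hi => by simp [patch, hi])
    · exact Finset.sum_congr rfl (fun i hi => by
        simp only [Finset.mem_compl] at hi; simp [patch, hi])
  have key : Sufficient f x ε S ↔ 0 ≤ β₀ + ∑ i ∈ S, g i (x i) + ∑ i ∈ Sᶜ, m i := by
    constructor
    · intro hS
      have := hS c habs
      rw [hfx] at this
      have h1 := (hfone _).2 this
      have := (hfone _).2 this
      rw [hpatchsum] at this
      have hm' : ∑ i ∈ Sᶜ, g i (c i) = ∑ i ∈ Sᶜ, m i :=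
        Finset.sum_congr rfl (fun i _ => hgc i)
      rw [hm'] at this
      linarith
    · intro h xt hxt
      rw [hfx]
      apply (hfone _).1
      rw [hpatchsum]
      have hle : ∑ i ∈ Sᶜ, m i ≤ ∑ i ∈ Sᶜ, g i (xt i) := by
        apply Finset.sum_le_sum
        intro i _
        apply (hm i).2
        refine ⟨xt i, ?_, rfl⟩
        have := abs_le.1 (hxt i)
        constructor <;> linarith
      linarith
  have algeq : (0 ≤ β₀ + ∑ i ∈ S, g i (x i) + ∑ i ∈ Sᶜ, m i) ↔
      (∑ i ∈ Sᶜ, (g i (x i) - m i) ≤ β₀ + ∑ i, g i (x i)) := by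
    rw [hsplit x, Finset.sum_sub_distrib]
    constructor <;> intro h <;> linarith
  exact ⟨key, key.trans algeq⟩
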